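/- Let k be a commutative ring and X a type. There is a unique brace algebra structure on BR(X), the free k-module on the set of X-colored planar rooted trees, such that for every x ∈ X and all X-colored planar rooted trees T_1,…,T_n: •_x{T_1,…,T_n} = node x [T_1,…,T_n] (the tree obtained by grafting T_1,…,T_n, in this order, on a new root colored x). -/

import Mathlib

open TensorProduct

/-- All decompositions of a list `A` into `j` (possibly empty) consecutive blocks. -/
def cuts {V : Type*} : ℕ → List V → List (List (List V))
  | 0, A => if A.isEmpty then [[]] else []
  | j + 1, A =>
      (List.range (A.length + 1)).flatMap
        fun i => (cuts j (A.drop i)).map fun P => A.take i :: P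

/-- Given `Ys = [Y_1, …, Y_n]` and a decomposition `P = [A_1, …, A_{2n+1}]` of a list into
`2n+1` consecutive blocks, the argument list
`A_1 ++ [Y_1{A_2}] ++ A_3 ++ ⋯ ++ A_{2n-1} ++ [Y_n{A_{2n}}] ++ A_{2n+1}`. -/
def interleave {V : Type*} (br : V → List V → V) : List V → List (List V) → List V
  | [], P => P.flatten
  | Y :: Ys, A1 :: A2 :: P => A1 ++ br Y A2 :: interleave br Ys P
  | _ :: _, _ => []

/-- A brace algebra over `k`: a `k`-module `V` with operations
`(X, Y_1, …, Y_n) ↦ X{Y_1, …, Y_n}` (encoded as `br : V → List V → V`), `k`-linear in each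
argument, with `X{} = X`, satisfying the brace identity
`X{Y_1,…,Y_n}{A} = Σ X{A_1, Y_1{A_2}, A_3, Y_2{A_4}, …, A_{2n-1}, Y_n{A_{2n}}, A_{2n+1}}`,
the sum ranging over all decompositions of `A` into `2n+1` (possibly empty) consecutive
blocks. -/
structure BraceAlg (k V : Type*) [CommRing k] [AddCommGroup V] [Module k V] where
  br : V → List V → V
  br_nil : ∀ X : V, br X [] = X
  br_linear_left : ∀ A : List V, IsLinearMap k fun X : V => br X A
  br_linear_arg : ∀ (X : V) (A B : List V) (a b : k) (Y Z : V),
    br X (A ++ (a • Y + b • Z) :: B) = a • br X (A ++ Y :: B) + b • br X (A ++ Z :: B)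
  br_identity : ∀ (X : V) (Ys A : List V),
    br (br X Ys) A =
      ((cuts (2 * Ys.length + 1) A).map fun P => br X (interleave br Ys P)).sum

/-- The trilinear assembling map `c₁ ⊗ c₂ ⊗ c₃ ↦ f c₁ * g c₂ * h c₃` on an algebra. -/
noncomputable def mix {k A : Type*} [CommRing k] [Ring A] [Algebra k A]
    (f g h : A →ₗ[k] A) : (A ⊗[k] A) ⊗[k] A →ₗ[k] A :=
  TensorProduct.lift ((LinearMap.mul k A).compl₁₂
    (TensorProduct.lift ((LinearMap.mul k A).compl₁₂ f g)) h)

/-- An `X`-colored planar rooted tree: a color in `X` together with a finite ordered list of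
planar subtrees. -/
inductive PTree (X : Type*) : Type _ where
  | node : X → List (PTree X) → PTree X

namespace PB


def S {α M : Type*} [AddCommMonoid M] (l : List α) (f : α → M) : M := (l.map f).sum

variable {α β M N : Type*} [AddCommMonoid M] [AddCommMonoid N]

@[simp] theorem S_nil (f : α → M) : S [] f = 0 := rfl

@[simp] theorem S_cons (a : α) (l : List α) (f : α → M) : S (a :: l) f = f a + S l f := rfl

@[simp] theorem S_singleton (a : α) (f : α → M) : S [a] f = f a := by simp [S]

theorem S_append (l₁ l₂ : List α) (f : α → M) : S (l₁ ++ l₂) f = S l₁ f + S l₂ f := by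
  simp [S]

theorem S_map (g : β → α) (l : List β) (f : α → M) : S (l.map g) f = S l (fun b => f (g b)) := by
  unfold S; rw [List.map_map]; rfl

theorem S_congr {l : List α} {f g : α → M} (h : ∀ a ∈ l, f a = g a) : S l f = S l g := by
  unfold S; rw [List.map_congr_left h]

theorem S_flatMap (l : List α) (g : α → List β) (f : β → M) :
    S (l.flatMap g) f = S l (fun a => S (g a) f) := by
  induction l with
  | nil => rfl
  | cons a l ih => simp [List.flatMap_cons, S_append, ih]

@[simp] theorem S_zero (l : List α) : S l (fun _ => (0 : M)) = 0 := by
  induction l with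
  | nil => rfl
  | cons a l ih => simp [ih]

theorem S_add (l : List α) (f g : α → M) :
    S l (fun a => f a + g a) = S l f + S l g := by
  induction l with
  | nil => simp
  | cons a l ih => simp [ih]; abel

theorem S_comm (l : List α) (m : List β) (f : α → β → M) :
    S l (fun a => S m (f a)) = S m (fun b => S l (fun a => f a b)) := by
  induction l with
  | nil => simp
  | cons a l ih => simp [ih, S_add]

theorem S_hom {F : Type*} [FunLike F M N] [AddMonoidHomClass F M N] (φ : F) (l : List α)
    (f : α → M) : φ (S l f) = S l (fun a => φ (f a)) := by
  unfold S; rw [map_list_sum, List.map_map]; rfl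

theorem S_smul {R : Type*} [Monoid R] [DistribMulAction R M] (r : R) (l : List α) (f : α → M) :
    r • S l f = S l (fun a => r • f a) := by
  unfold S; rw [List.smul_sum, List.map_map]; rfl

def splits : List α → List (List α × List α)
  | [] => [([], [])]
  | a :: A => ([], a :: A) :: (splits A).map fun p => (a :: p.1, p.2)

@[simp] theorem splits_nil : splits ([] : List α) = [([], [])] := rfl

theorem splits_cons (a : α) (A : List α) :
    splits (a :: A) = ([], a :: A) :: (splits A).map fun p => (a :: p.1, p.2) := rfl

theorem S_splits_cons (a : α) (A : List α) (F : List α × List α → M) :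
    S (splits (a :: A)) F = F ([], a :: A) + S (splits A) (fun p => F (a :: p.1, p.2)) := by
  rw [splits_cons, S_cons, S_map]

theorem splits_eq (A : List α) :
    splits A = (List.range (A.length + 1)).map fun i => (A.take i, A.drop i) := by
  induction A with
  | nil => rfl
  | cons a A ih =>
      rw [splits_cons, ih]
      simp only [List.length_cons, List.range_succ_eq_map, List.map_cons, List.map_map]
      simp [Function.comp]

theorem cuts_succ_eq (j : ℕ) (A : List α) :
    cuts (j + 1) A = (splits A).flatMap fun p => (cuts j p.2).map (p.1 :: ·) := by
  rw [splits_eq, List.flatMap_map]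
  rfl

theorem S_cuts_succ (j : ℕ) (A : List α) (f : List (List α) → M) :
    S (cuts (j + 1) A) f = S (splits A) fun p => S (cuts j p.2) fun P => f (p.1 :: P) := by
  rw [cuts_succ_eq, S_flatMap]
  exact S_congr fun p _ => S_map _ _ _

@[simp] theorem cuts_zero_nil : cuts 0 ([] : List α) = [[]] := rfl

theorem cuts_zero_ne {A : List α} (h : A ≠ []) : cuts 0 A = [] := by
  unfold cuts; simp [h]

theorem mem_cuts_zero {A : List α} {P : List (List α)} (h : P ∈ cuts 0 A) :
    P = [] ∧ A = [] := by
  rcases A with _ | ⟨a, A⟩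
  · simp at h; simp [h]
  · rw [cuts_zero_ne (by simp)] at h; simp at h

theorem cuts_nil (j : ℕ) : cuts j ([] : List α) = [List.replicate j []] := by
  induction j with
  | zero => rfl
  | succ j ih => rw [cuts_succ_eq]; simp [ih, List.replicate_succ]

theorem cuts_length : ∀ {j : ℕ} {A : List α} {P : List (List α)}, P ∈ cuts j A → P.length = j := by
  intro j
  induction j with
  | zero => intro A P h; simp [(mem_cuts_zero h).1]
  | succ j ih =>
      intro A P h
      rw [cuts_succ_eq] at h
      simp only [List.mem_flatMap, List.mem_map] at h
      obtain ⟨p, _, P', hP', rfl⟩ := h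
      simp [ih hP']

theorem S_cuts_zero_splits (A : List α) (g : List α → List α → M) :
    S (splits A) (fun p => S (cuts 0 p.2) fun _ => g p.1 p.2) = g A [] := by
  induction A generalizing g with
  | nil => simp
  | cons a A ih =>
      rw [S_splits_cons]
      dsimp only
      rw [cuts_zero_ne (by simp : (a :: A) ≠ []), ih (fun u v => g (a :: u) v)]
      simp

theorem S_cuts_zero_splits_fst (A : List α) (g : List α × List α → M) :
    S (splits A) (fun p => S (cuts 0 p.1) fun _ => g p) = g ([], A) := by
  induction A with
  | nil => simp
  | cons a A ih =>
      rw [S_splits_cons]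
      simp only
      have : (S (splits A) fun p => S (cuts 0 ((a :: p.1 : List α))) fun _ => g (a :: p.1, p.2))
          = 0 := by
        rw [S_congr (g := fun _ => (0:M)) (fun p _ => by rw [cuts_zero_ne (by simp)]; rfl), S_zero]
      rw [this]
      simp

theorem S_cuts_one (A : List α) (f : List (List α) → M) : S (cuts 1 A) f = f [A] := by
  rw [S_cuts_succ]
  have h : ∀ p ∈ splits (α := α) A,
      (S (cuts 0 p.2) fun P => f (p.1 :: P)) = S (cuts 0 p.2) fun _ => f [p.1] := by
    intro p _
    exact S_congr fun P hP => by rw [(mem_cuts_zero hP).1]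
  rw [S_congr h, S_cuts_zero_splits A (fun u _ => f [u])]

theorem splits_assoc (A : List α) (G : List α → List α → List α → M) :
    S (splits A) (fun p => S (splits p.2) fun q => G p.1 q.1 q.2)
      = S (splits A) (fun p => S (splits p.1) fun q => G q.1 q.2 p.2) := by
  induction A generalizing G with
  | nil => simp
  | cons a A ih =>
      rw [S_splits_cons, S_splits_cons]
      dsimp only
      rw [S_splits_cons]
      dsimp only
      have hrhs : (S (splits A) fun p => S (splits ((a :: p.1 : List α))) fun q =>
          G q.1 q.2 p.2) = S (splits A) fun p =>
          (G [] (a :: p.1) p.2 + S (splits p.1) fun q => G (a :: q.1) q.2 p.2) := by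
        refine S_congr fun p _ => ?_
        rw [S_splits_cons]
      rw [hrhs, S_add, ih (fun u v w => G (a :: u) v w)]
      simp only [splits_nil, S_singleton]
      abel

theorem splits_append_cons (L : List α) (e : α) (R : List α) (F : List α → List α → M) :
    S (splits (L ++ e :: R)) (fun p => F p.1 p.2)
      = S (splits L) (fun p => F p.1 (p.2 ++ e :: R))
        + S (splits R) (fun p => F (L ++ e :: p.1) p.2) := by
  induction L generalizing F with
  | nil =>
      simp only [List.nil_append]
      rw [S_splits_cons]
      simp
  | cons a L ih =>
      have h1 : (a :: L) ++ e :: R = a :: (L ++ e :: R) := rfl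
      rw [h1, S_splits_cons, ih (fun u v => F (a :: u) v), S_splits_cons]
      dsimp only
      simp only [List.cons_append]
      abel

theorem splits_assoc4 (A : List α) (G : List α → List α → List α → List α → M) :
    S (splits A) (fun p => S (splits p.2) fun q => S (splits q.2) fun r => G p.1 q.1 r.1 r.2)
      = S (splits A) (fun p => S (splits p.1) fun q => S (splits q.2) fun r =>
          G q.1 r.1 r.2 p.2) := by
  have step1 : ∀ p : List α × List α,
      (S (splits p.2) fun q => S (splits q.2) fun r => G p.1 q.1 r.1 r.2)
        = S (splits p.2) fun q => S (splits q.1) fun r => G p.1 r.1 r.2 q.2 :=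
    fun p => splits_assoc p.2 (fun u v w => G p.1 u v w)
  rw [S_congr (fun p _ => step1 p)]
  exact splits_assoc A (fun u v w => S (splits v) fun r => G u r.1 r.2 w)

theorem splits_assoc4b (A : List α) (G : List α → List α → List α → List α → M) :
    S (splits A) (fun p => S (splits p.2) fun q => S (splits q.2) fun r => G p.1 q.1 r.1 r.2)
      = S (splits A) (fun p => S (splits p.1) fun q => S (splits p.2) fun r =>
          G q.1 q.2 r.1 r.2) :=
  splits_assoc A (fun u v w => S (splits w) fun r => G u v r.1 r.2)

theorem cuts_add_S (i j : ℕ) (A : List α) (f : List (List α) → M) :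
    S (cuts (i + j) A) f
      = S (splits A) fun p => S (cuts i p.1) fun P₁ => S (cuts j p.2) fun P₂ => f (P₁ ++ P₂) := by
  induction i generalizing A f with
  | zero =>
      simp only [Nat.zero_add]
      have h : ∀ p ∈ splits (α := α) A,
          (S (cuts 0 p.1) fun P₁ => S (cuts j p.2) fun P₂ => f (P₁ ++ P₂))
            = S (cuts 0 p.1) fun _ => S (cuts j p.2) fun P₂ => f P₂ := by
        intro p _
        exact S_congr fun P₁ hP₁ => by rw [(mem_cuts_zero hP₁).1]; rfl
      rw [S_congr h, S_cuts_zero_splits_fst A (fun p => S (cuts j p.2) fun P₂ => f P₂)]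
  | succ i ih =>
      have : i + 1 + j = (i + j) + 1 := by omega
      rw [this, S_cuts_succ]
      conv_lhs => rw [S_congr (fun p (_ : p ∈ splits A) => ih p.2 (fun P => f (p.1 :: P)))]
      conv_rhs => rw [S_congr (fun p (_ : p ∈ splits A) => S_cuts_succ i p.1
        (fun P₁ => S (cuts j p.2) fun P₂ => f (P₁ ++ P₂)))]
      exact splits_assoc A (fun u v w => S (cuts i v) fun P₁ => S (cuts j w) fun P₂ =>
        f (u :: (P₁ ++ P₂)))



variable {k X : Type*} [CommRing k]

/-! ### The algebra of lists -/

noncomputable def etaW : (PTree X →₀ k) →ₗ[k] (List (PTree X) →₀ k) :=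
  Finsupp.lmapDomain k k (fun T => [T])

noncomputable def wmul :
    (List (PTree X) →₀ k) →ₗ[k] (List (PTree X) →₀ k) →ₗ[k] (List (PTree X) →₀ k) :=
  Finsupp.lsum k fun a => LinearMap.toSpanSingleton k _ (Finsupp.lmapDomain k k (fun b => a ++ b))

@[simp] theorem wmul_single_single (a b : List (PTree X)) (x y : k) :
    wmul (Finsupp.single a x) (Finsupp.single b y) = Finsupp.single (a ++ b) (x * y) := by
  unfold wmul
  rw [Finsupp.lsum_single]
  rw [LinearMap.toSpanSingleton_apply]
  simp [Finsupp.lmapDomain, Finsupp.mapDomain_single, Finsupp.smul_single]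

theorem wmul_assoc (f g h : List (PTree X) →₀ k) :
    wmul (wmul f g) h = wmul f (wmul g h) := by
  induction f using Finsupp.induction_linear with
  | zero => simp only [map_zero, LinearMap.zero_apply]
  | add f₁ f₂ ih₁ ih₂ => simp only [map_add, LinearMap.add_apply, ih₁, ih₂]
  | single a x =>
      induction g using Finsupp.induction_linear with
      | zero => simp only [map_zero, LinearMap.zero_apply, LinearMap.map_zero]
      | add g₁ g₂ ih₁ ih₂ => simp only [map_add, LinearMap.add_apply, ih₁, ih₂]
      | single b y =>
          induction h using Finsupp.induction_linear with
          | zero => simp only [map_zero]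
          | add h₁ h₂ ih₁ ih₂ => simp only [map_add, ih₁, ih₂]
          | single c z =>
              rw [wmul_single_single, wmul_single_single, wmul_single_single,
                wmul_single_single, mul_assoc, List.append_assoc]

noncomputable def wone : List (PTree X) →₀ k := Finsupp.single [] 1

@[simp] theorem wone_mul (g : List (PTree X) →₀ k) : wmul wone g = g := by
  induction g using Finsupp.induction_linear with
  | zero => simp
  | add g₁ g₂ ih₁ ih₂ => simp [map_add, ih₁, ih₂]
  | single b y => rw [wone, wmul_single_single]; simp

@[simp] theorem mul_wone (g : List (PTree X) →₀ k) : wmul g wone = g := by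
  induction g using Finsupp.induction_linear with
  | zero => simp
  | add g₁ g₂ ih₁ ih₂ => simp [map_add, LinearMap.add_apply, ih₁, ih₂]
  | single b y => rw [wone, wmul_single_single]; simp

noncomputable def lprod : List (PTree X →₀ k) → (List (PTree X) →₀ k)
  | [] => wone
  | v :: L => wmul (etaW v) (lprod L)

@[simp] theorem lprod_nil : lprod ([] : List (PTree X →₀ k)) = wone := rfl

theorem lprod_cons (v : PTree X →₀ k) (L : List (PTree X →₀ k)) :
    lprod (v :: L) = wmul (etaW v) (lprod L) := rfl

theorem lprod_singleton (v : PTree X →₀ k) : lprod [v] = etaW v := by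
  rw [lprod_cons, lprod_nil, mul_wone]

theorem lprod_append (L₁ L₂ : List (PTree X →₀ k)) :
    lprod (L₁ ++ L₂) = wmul (lprod L₁) (lprod L₂) := by
  induction L₁ with
  | nil => simp
  | cons v L₁ ih => simp only [List.cons_append, lprod_cons, ih, wmul_assoc]

theorem lprod_middle (B : List (PTree X →₀ k)) (e : PTree X →₀ k) (M : List (PTree X →₀ k)) :
    lprod (B ++ e :: M) = wmul (lprod B) (wmul (etaW e) (lprod M)) := by
  rw [lprod_append, lprod_cons]

noncomputable def eta1 (T : PTree X) : PTree X →₀ k := Finsupp.single T 1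

@[simp] theorem etaW_eta1 (T : PTree X) :
    etaW (eta1 T) = (Finsupp.single [T] 1 : List (PTree X) →₀ k) := by
  rw [eta1, etaW, Finsupp.lmapDomain_apply, Finsupp.mapDomain_single]

theorem lprod_eta1 (Ts : List (PTree X)) :
    lprod (Ts.map (eta1 (k := k))) = Finsupp.single Ts 1 := by
  induction Ts with
  | nil => rfl
  | cons T Ts ih => rw [List.map_cons, lprod_cons, etaW_eta1, ih, wmul_single_single]; simp

noncomputable def glin (x : X) : (List (PTree X) →₀ k) →ₗ[k] (PTree X →₀ k) :=
  Finsupp.lmapDomain k k (PTree.node x)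

@[simp] theorem glin_single (x : X) (Ts : List (PTree X)) (c : k) :
    glin x (Finsupp.single Ts c) = Finsupp.single (PTree.node x Ts) c := by
  rw [glin, Finsupp.lmapDomain_apply, Finsupp.mapDomain_single]

/-! ### The brace operations on trees -/

noncomputable def brF : ℕ → PTree X → List (PTree X →₀ k) → (PTree X →₀ k)
  | 0, _, _ => 0
  | n + 1, PTree.node x Ts, A =>
      S (cuts (2 * Ts.length + 1) A) fun P =>
        glin x (lprod (interleave (fun v B => v.sum fun T a => a • brF n T B) (Ts.map eta1) P))

theorem brF_succ (n : ℕ) (x : X) (Ts : List (PTree X)) (A : List (PTree X →₀ k)) :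
    brF (n + 1) (PTree.node x Ts) A =
      S (cuts (2 * Ts.length + 1) A) fun P =>
        glin x (lprod (interleave (fun v B => v.sum fun T a => a • brF n T B)
          (Ts.map eta1) P)) := by
  rfl

noncomputable def brT (T : PTree X) : List (PTree X →₀ k) → (PTree X →₀ k) := brF (sizeOf T) T

noncomputable def brL (A : List (PTree X →₀ k)) : (PTree X →₀ k) →ₗ[k] (PTree X →₀ k) :=
  Finsupp.lsum k fun T => LinearMap.toSpanSingleton k _ (brT T A)

noncomputable def br (v : PTree X →₀ k) (A : List (PTree X →₀ k)) : PTree X →₀ k := brL A v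

theorem interleave_congr {V' : Type*} {f g : V' → List V' → V'} :
    ∀ {Ys : List V'}, (∀ Y ∈ Ys, ∀ B, f Y B = g Y B) →
      ∀ P, interleave f Ys P = interleave g Ys P := by
  intro Ys
  induction Ys with
  | nil => intro _ P; rfl
  | cons Y Ys ih =>
      intro h P
      match P with
      | [] => rfl
      | [A1] => rfl
      | A1 :: A2 :: P =>
          show A1 ++ f Y A2 :: interleave f Ys P = A1 ++ g Y A2 :: interleave g Ys P
          rw [h Y (by simp) A2, ih (fun Y hY B => h Y (by simp [hY]) B) P]

theorem sizeOf_mem_lt {x : X} {Ts : List (PTree X)} {T : PTree X} (h : T ∈ Ts) :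
    sizeOf T < sizeOf (PTree.node x Ts) := by
  have := List.sizeOf_lt_of_mem h
  simp only [PTree.node.sizeOf_spec]
  omega

theorem sizeOf_pos (T : PTree X) : 1 ≤ sizeOf T := by
  obtain ⟨x, Ts⟩ := T
  simp only [PTree.node.sizeOf_spec]
  omega

theorem brF_eq : ∀ (n m : ℕ) (T : PTree X), sizeOf T ≤ n → sizeOf T ≤ m →
    brF (k := k) n T = brF m T := by
  intro n
  induction n with
  | zero => intro m T h _; exact absurd (le_trans (sizeOf_pos T) h) (by omega)
  | succ n ih =>
      intro m T hn hm
      obtain ⟨x, Ts⟩ := T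
      rcases m with _ | m
      · exact absurd (le_trans (sizeOf_pos _) hm) (by omega)
      · funext A
        rw [brF_succ, brF_succ]
        have hc : ∀ Y ∈ Ts.map (eta1 (k := k)), ∀ B : List (PTree X →₀ k),
              (fun v B => v.sum fun T a => a • brF n T B) Y B =
              (fun v B => v.sum fun T a => a • brF m T B) Y B := by
            intro Y hY B
            obtain ⟨T', hT', rfl⟩ := List.mem_map.1 hY
            show (eta1 T').sum (fun T a => a • brF n T B)
              = (eta1 T').sum (fun T a => a • brF m T B)
            rw [eta1,
              Finsupp.sum_single_index (h := fun T a => a • brF n T B) (by simp),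
              Finsupp.sum_single_index (h := fun T a => a • brF m T B) (by simp)]
            have hlt := sizeOf_mem_lt (x := x) hT'
            rw [one_smul, one_smul, ih m T' (by omega) (by omega)]
        exact congrArg _ (funext fun P => congrArg _ (congrArg _ (interleave_congr hc P)))

theorem brT_eq_brF {n : ℕ} (T : PTree X) (h : sizeOf T ≤ n) : brT (k := k) T = brF n T :=
  brF_eq _ _ _ le_rfl h

@[simp] theorem br_eta1 (T : PTree X) (A : List (PTree X →₀ k)) :
    br (eta1 T) A = brT T A := by
  rw [br, brL, eta1, Finsupp.lsum_single, LinearMap.toSpanSingleton_apply, one_smul]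

theorem brT_node (x : X) (Ts : List (PTree X)) (A : List (PTree X →₀ k)) :
    brT (PTree.node x Ts) A =
      S (cuts (2 * Ts.length + 1) A) fun P =>
        glin x (lprod (interleave br (Ts.map eta1) P)) := by
  obtain ⟨n, hn⟩ : ∃ n, sizeOf (PTree.node x Ts) = n + 1 :=
    ⟨sizeOf (PTree.node x Ts) - 1, by have := sizeOf_pos (PTree.node x Ts); omega⟩
  rw [brT, hn, brF_succ]
  have hc : ∀ Y ∈ Ts.map (eta1 (k := k)), ∀ B : List (PTree X →₀ k),
      (fun v B => v.sum fun T a => a • brF n T B) Y B = br Y B := by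
    intro Y hY B
    obtain ⟨T', hT', rfl⟩ := List.mem_map.1 hY
    show (eta1 T').sum (fun T a => a • brF n T B) = _
    rw [eta1, Finsupp.sum_single_index (h := fun T a => a • brF n T B) (by simp), one_smul]
    show brF n T' B = br (eta1 T') B
    rw [br_eta1, brT_eq_brF (n := n) T' (by have := sizeOf_mem_lt (x := x) hT'; omega)]
  exact congrArg _ (funext fun P => congrArg _ (congrArg _ (interleave_congr hc P)))


/-! ### interleave lemmas -/

def ilpre {V' : Type*} (br : V' → List V' → V') : List V' → List (List V') → List V'
  | [], _ => []
  | Y :: Ys, A1 :: A2 :: P => A1 ++ br Y A2 :: ilpre br Ys P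
  | _ :: _, _ => []

theorem il_append {V' : Type*} (f : V' → List V' → V') :
    ∀ (L₁ : List V') (L₂ : List V') (P₁ P₂ : List (List V')), P₁.length = 2 * L₁.length →
      interleave f (L₁ ++ L₂) (P₁ ++ P₂) = ilpre f L₁ P₁ ++ interleave f L₂ P₂ := by
  intro L₁
  induction L₁ with
  | nil =>
      intro L₂ P₁ P₂ h
      have hP : P₁ = [] := List.length_eq_zero_iff.1 (by simpa using h)
      subst hP
      rfl
  | cons Y L₁ ih =>
      intro L₂ P₁ P₂ h
      match P₁, h with
      | D1 :: D2 :: P₁', h =>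
          show D1 ++ f Y D2 :: interleave f (L₁ ++ L₂) (P₁' ++ P₂)
              = (D1 ++ f Y D2 :: ilpre f L₁ P₁') ++ interleave f L₂ P₂
          rw [ih L₂ P₁' P₂ (by simp at h ⊢; omega)]
          simp

theorem il_last {V' : Type*} (f : V' → List V' → V') :
    ∀ (L : List V') (P₁ : List (List V')) (B : List V'), P₁.length = 2 * L.length →
      interleave f L (P₁ ++ [B]) = ilpre f L P₁ ++ B := by
  intro L
  induction L with
  | nil =>
      intro P₁ B h
      have hP : P₁ = [] := List.length_eq_zero_iff.1 (by simpa using h)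
      subst hP
      show ([B] : List (List V')).flatten = [] ++ B
      simp
  | cons Y L ih =>
      intro P₁ B h
      match P₁, h with
      | D1 :: D2 :: P₁', h =>
          show D1 ++ f Y D2 :: interleave f L (P₁' ++ [B])
              = (D1 ++ f Y D2 :: ilpre f L P₁') ++ B
          rw [ih P₁' B (by simp at h ⊢; omega)]
          simp

theorem ilpre_append {V' : Type*} (f : V' → List V' → V') :
    ∀ (L₁ : List V') (L₂ : List V') (P₁ P₂ : List (List V')), P₁.length = 2 * L₁.length →
      ilpre f (L₁ ++ L₂) (P₁ ++ P₂) = ilpre f L₁ P₁ ++ ilpre f L₂ P₂ := by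
  intro L₁
  induction L₁ with
  | nil =>
      intro L₂ P₁ P₂ h
      have hP : P₁ = [] := List.length_eq_zero_iff.1 (by simpa using h)
      subst hP
      rfl
  | cons Y L₁ ih =>
      intro L₂ P₁ P₂ h
      match P₁, h with
      | D1 :: D2 :: P₁', h =>
          show D1 ++ f Y D2 :: ilpre f (L₁ ++ L₂) (P₁' ++ P₂)
              = (D1 ++ f Y D2 :: ilpre f L₁ P₁') ++ ilpre f L₂ P₂
          rw [ih L₂ P₁' P₂ (by simp at h ⊢; omega)]
          simp

theorem il_replicate {V' : Type*} (f : V' → List V' → V') :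
    ∀ L : List V', interleave f L (List.replicate (2 * L.length + 1) [])
      = L.map fun Y => f Y [] := by
  intro L
  induction L with
  | nil => rfl
  | cons Y L ih =>
      have h : 2 * (Y :: L).length + 1 = (2 * L.length + 1) + 1 + 1 := by
        simp [List.length_cons]; ring
      rw [h, List.replicate_succ, List.replicate_succ]
      show [] ++ f Y [] :: interleave f L (List.replicate (2 * L.length + 1) [])
          = (Y :: L).map fun Y => f Y []
      rw [ih]
      simp

/-! ### the Psi machinery -/

theorem S_wmul_left (c : List (PTree X) →₀ k) {α : Type*} (l : List α)
    (f : α → (List (PTree X) →₀ k)) :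
    S l (fun x => wmul c (f x)) = wmul c (S l f) := (S_hom (wmul c) l f).symm

theorem S_wmul_right (c : List (PTree X) →₀ k) {α : Type*} (l : List α)
    (f : α → (List (PTree X) →₀ k)) :
    S l (fun x => wmul (f x) c) = wmul (S l f) c := (S_hom (LinearMap.flip wmul c) l f).symm

noncomputable def Psi (L A : List (PTree X →₀ k)) : List (PTree X) →₀ k :=
  S (cuts (2 * L.length + 1) A) fun P => lprod (interleave br L P)

noncomputable def Psip (L A : List (PTree X →₀ k)) : List (PTree X) →₀ k :=
  S (cuts (2 * L.length) A) fun P => lprod (ilpre br L P)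

theorem Psi_nil (A : List (PTree X →₀ k)) : Psi [] A = lprod A := by
  rw [Psi, show 2 * ([] : List (PTree X →₀ k)).length + 1 = 1 by simp, S_cuts_one]
  show lprod ([A].flatten) = lprod A
  simp

theorem PsiPsip (L A : List (PTree X →₀ k)) :
    Psi L A = S (splits A) fun p => wmul (Psip L p.1) (lprod p.2) := by
  rw [Psi, cuts_add_S (2 * L.length) 1 A]
  refine S_congr fun p _ => ?_
  have h1 : ∀ P₁ ∈ cuts (2 * L.length) p.1,
      (S (cuts 1 p.2) fun P₂ => lprod (interleave br L (P₁ ++ P₂)))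
        = wmul (lprod (ilpre br L P₁)) (lprod p.2) := by
    intro P₁ hP₁
    rw [S_cuts_one, il_last br L P₁ p.2 (cuts_length hP₁), lprod_append]
  rw [S_congr h1, S_wmul_right, Psip]

theorem Psip_append (L₁ L₂ A : List (PTree X →₀ k)) :
    Psip (L₁ ++ L₂) A = S (splits A) fun p => wmul (Psip L₁ p.1) (Psip L₂ p.2) := by
  have hl : 2 * (L₁ ++ L₂).length = 2 * L₁.length + 2 * L₂.length := by
    simp [List.length_append]; ring
  rw [Psip, hl, cuts_add_S]
  refine S_congr fun p _ => ?_
  have h1 : ∀ P₁ ∈ cuts (2 * L₁.length) p.1,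
      (S (cuts (2 * L₂.length) p.2) fun P₂ => lprod (ilpre br (L₁ ++ L₂) (P₁ ++ P₂)))
        = wmul (lprod (ilpre br L₁ P₁)) (Psip L₂ p.2) := by
    intro P₁ hP₁
    have h2 : ∀ P₂ ∈ cuts (2 * L₂.length) p.2,
        lprod (ilpre br (L₁ ++ L₂) (P₁ ++ P₂))
          = wmul (lprod (ilpre br L₁ P₁)) (lprod (ilpre br L₂ P₂)) := by
      intro P₂ _
      rw [ilpre_append br L₁ L₂ P₁ P₂ (cuts_length hP₁), lprod_append]
    rw [S_congr h2, S_wmul_left, Psip]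
  rw [S_congr h1, S_wmul_right]
  rfl

theorem Psip_single (u : PTree X →₀ k) (A : List (PTree X →₀ k)) :
    Psip [u] A = S (splits A) fun p => wmul (lprod p.1) (etaW (br u p.2)) := by
  rw [Psip, show 2 * ([u] : List (PTree X →₀ k)).length = 1 + 1 by simp, S_cuts_succ]
  refine S_congr fun p _ => ?_
  rw [S_cuts_one]
  show lprod (p.1 ++ br u p.2 :: ilpre br [] []) = _
  show lprod (p.1 ++ br u p.2 :: []) = _
  rw [lprod_append, lprod_singleton]

theorem PsiREC (Y : PTree X →₀ k) (L A : List (PTree X →₀ k)) :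
    Psi (Y :: L) A = S (splits A) fun p => S (splits p.2) fun q =>
      wmul (lprod p.1) (wmul (etaW (br Y q.1)) (Psi L q.2)) := by
  have hlen : 2 * (Y :: L).length + 1 = (1 + 1) + (2 * L.length + 1) := by
    simp [List.length_cons]; ring
  calc Psi (Y :: L) A
      = S (splits A) fun p => S (cuts (1+1) p.1) fun P₁ =>
          S (cuts (2 * L.length + 1) p.2) fun P₂ =>
            lprod (interleave br (Y :: L) (P₁ ++ P₂)) := by
        rw [Psi, hlen, cuts_add_S]
    _ = S (splits A) fun p => S (splits p.1) fun q =>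
          wmul (lprod q.1) (wmul (etaW (br Y q.2)) (Psi L p.2)) := by
        refine S_congr fun p _ => ?_
        rw [S_cuts_succ]
        refine S_congr fun q _ => ?_
        rw [S_cuts_one]
        have h2 : ∀ P₂ ∈ cuts (2 * L.length + 1) p.2,
            lprod (interleave br (Y :: L) ((q.1 :: [q.2]) ++ P₂))
              = wmul (lprod q.1) (wmul (etaW (br Y q.2)) (lprod (interleave br L P₂))) := by
          intro P₂ _
          show lprod (q.1 ++ br Y q.2 :: interleave br L P₂) = _
          rw [lprod_middle]
        rw [S_congr h2, S_wmul_left, S_wmul_left, Psi]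
    _ = _ := (splits_assoc A fun u v w =>
          wmul (lprod u) (wmul (etaW (br Y v)) (Psi L w))).symm

theorem PsiAPP (L₁ L₂ A : List (PTree X →₀ k)) :
    Psi (L₁ ++ L₂) A = S (splits A) fun p => wmul (Psip L₁ p.1) (Psi L₂ p.2) := by
  have hl : 2 * (L₁ ++ L₂).length + 1 = 2 * L₁.length + (2 * L₂.length + 1) := by
    simp [List.length_append]; ring
  rw [Psi, hl, cuts_add_S]
  refine S_congr fun p _ => ?_
  have h1 : ∀ P₁ ∈ cuts (2 * L₁.length) p.1,
      (S (cuts (2 * L₂.length + 1) p.2) fun P₂ => lprod (interleave br (L₁ ++ L₂) (P₁ ++ P₂)))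
        = wmul (lprod (ilpre br L₁ P₁)) (Psi L₂ p.2) := by
    intro P₁ hP₁
    have h2 : ∀ P₂ ∈ cuts (2 * L₂.length + 1) p.2,
        lprod (interleave br (L₁ ++ L₂) (P₁ ++ P₂))
          = wmul (lprod (ilpre br L₁ P₁)) (lprod (interleave br L₂ P₂)) := by
      intro P₂ _
      rw [il_append br L₁ L₂ P₁ P₂ (cuts_length hP₁), lprod_append]
    rw [S_congr h2, S_wmul_left, Psi]
  rw [S_congr h1, S_wmul_right, Psip]

/-! ### brT on the empty list -/

theorem brT_nil (T : PTree X) : brT (k := k) T [] = eta1 T := by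
  suffices h : ∀ (n : ℕ) (T : PTree X), sizeOf T ≤ n → brT (k := k) T [] = eta1 T from
    h (sizeOf T) T le_rfl
  intro n
  induction n with
  | zero => intro T h; exact absurd (le_trans (sizeOf_pos T) h) (by omega)
  | succ n ih =>
      intro T h
      obtain ⟨x, Ts⟩ := T
      rw [brT_node, cuts_nil]
      rw [S_singleton]
      have hrep : interleave br (Ts.map (eta1 (k := k)))
          (List.replicate (2 * Ts.length + 1) [])
          = (Ts.map (eta1 (k := k))).map fun Y => br Y [] := by
        have := il_replicate (br (k := k) (X := X)) (Ts.map eta1)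
        rwa [List.length_map] at this
      rw [hrep, List.map_map]
      have : (Ts.map fun T' => br (eta1 (k := k) T') []) = Ts.map eta1 := by
        refine List.map_congr_left fun T' hT' => ?_
        rw [br_eta1, ih T' (by have := sizeOf_mem_lt (x := x) hT'; omega)]
      rw [show ((fun Y => br Y []) ∘ eta1 = fun T' => br (eta1 (k := k) T') []) from rfl, this,
        lprod_eta1, glin_single]
      rfl

theorem br_apply (v : PTree X →₀ k) (A : List (PTree X →₀ k)) :
    br v A = v.sum fun T c => c • brT T A := by
  rw [br, brL, Finsupp.lsum_apply]
  rfl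

theorem br_nil (v : PTree X →₀ k) : br v [] = v := by
  rw [br_apply]
  have h1 : (v.sum fun T c => c • brT (k := k) T [])
      = v.sum fun T c => Finsupp.single T c :=
    Finsupp.sum_congr fun T _ => by
      rw [brT_nil, eta1, Finsupp.smul_single', mul_one]
  rw [h1, Finsupp.sum_single]

theorem br_zero_left (A : List (PTree X →₀ k)) : br 0 A = 0 := map_zero (brL A)

theorem br_add_left (v w : PTree X →₀ k) (A : List (PTree X →₀ k)) :
    br (v + w) A = br v A + br w A := map_add (brL A) v w

theorem br_smul_left (c : k) (v : PTree X →₀ k) (A : List (PTree X →₀ k)) :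
    br (c • v) A = c • br v A := map_smul (brL A) c v

/-! ### argument linearity -/

def ArgLin {M : Type*} [AddCommMonoid M] [Module k M] (g : List (PTree X →₀ k) → M) : Prop :=
  ∀ (C D : List (PTree X →₀ k)) (a b : k) (Y Z : PTree X →₀ k),
    g (C ++ (a • Y + b • Z) :: D) = a • g (C ++ Y :: D) + b • g (C ++ Z :: D)

theorem lprod_argLin : ArgLin (k := k) (X := X) lprod := by
  intro C D a b Y Z
  rw [lprod_middle, lprod_middle, lprod_middle]
  simp only [map_add, map_smul, LinearMap.add_apply, LinearMap.smul_apply]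

theorem S_comb {α M : Type*} [AddCommMonoid M] [Module k M] (l : List α) (f g h : α → M)
    (a b : k) (hpt : ∀ x ∈ l, f x = a • g x + b • h x) :
    S l f = a • S l g + b • S l h := by
  rw [S_congr hpt, S_add, ← S_smul, ← S_smul]

theorem Psi_argLin : ∀ L : List (PTree X →₀ k),
    (∀ Y ∈ L, ArgLin (br Y)) → ArgLin (Psi L) := by
  intro L
  induction L with
  | nil =>
      intro _ C D a b Y Z
      rw [Psi_nil, Psi_nil, Psi_nil]
      exact lprod_argLin C D a b Y Z
  | cons Y₀ L ih =>
      intro hL C D a b Yv Z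
      have hY₀ : ArgLin (br Y₀) := hL Y₀ (by simp)
      have ihL : ArgLin (Psi L) := ih fun Y hY => hL Y (by simp [hY])
      have key : ∀ w : PTree X →₀ k, Psi (Y₀ :: L) (C ++ w :: D)
          = (S (splits C) fun p =>
              (S (splits p.2) fun q => wmul (lprod p.1)
                  (wmul (etaW (br Y₀ q.1)) (Psi L (q.2 ++ w :: D))))
              + S (splits D) fun q => wmul (lprod p.1)
                  (wmul (etaW (br Y₀ (p.2 ++ w :: q.1))) (Psi L q.2)))
            + S (splits D) fun p => S (splits p.2) fun q =>
                wmul (lprod (C ++ w :: p.1)) (wmul (etaW (br Y₀ q.1)) (Psi L q.2)) := by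
        intro w
        rw [PsiREC]
        rw [splits_append_cons C w D fun u v => S (splits v) fun q =>
          wmul (lprod u) (wmul (etaW (br Y₀ q.1)) (Psi L q.2))]
        congr 1
        refine S_congr fun p _ => ?_
        rw [splits_append_cons p.2 w D fun u v =>
          wmul (lprod p.1) (wmul (etaW (br Y₀ u)) (Psi L v))]
      rw [key, key, key]
      have g1 : (S (splits C) fun p =>
            (S (splits p.2) fun q => wmul (lprod p.1)
                (wmul (etaW (br Y₀ q.1)) (Psi L (q.2 ++ (a • Yv + b • Z) :: D))))
            + S (splits D) fun q => wmul (lprod p.1)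
                (wmul (etaW (br Y₀ (p.2 ++ (a • Yv + b • Z) :: q.1))) (Psi L q.2)))
          = a • (S (splits C) fun p =>
              (S (splits p.2) fun q => wmul (lprod p.1)
                  (wmul (etaW (br Y₀ q.1)) (Psi L (q.2 ++ Yv :: D))))
              + S (splits D) fun q => wmul (lprod p.1)
                  (wmul (etaW (br Y₀ (p.2 ++ Yv :: q.1))) (Psi L q.2)))
            + b • (S (splits C) fun p =>
              (S (splits p.2) fun q => wmul (lprod p.1)
                  (wmul (etaW (br Y₀ q.1)) (Psi L (q.2 ++ Z :: D))))
              + S (splits D) fun q => wmul (lprod p.1)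
                  (wmul (etaW (br Y₀ (p.2 ++ Z :: q.1))) (Psi L q.2))) := by
        refine S_comb _ _ _ _ a b fun p _ => ?_
        have h11 : (S (splits p.2) fun q => wmul (lprod p.1)
              (wmul (etaW (br Y₀ q.1)) (Psi L (q.2 ++ (a • Yv + b • Z) :: D))))
            = a • (S (splits p.2) fun q => wmul (lprod p.1)
                (wmul (etaW (br Y₀ q.1)) (Psi L (q.2 ++ Yv :: D))))
              + b • (S (splits p.2) fun q => wmul (lprod p.1)
                (wmul (etaW (br Y₀ q.1)) (Psi L (q.2 ++ Z :: D)))) := by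
          refine S_comb _ _ _ _ a b fun q _ => ?_
          rw [ihL q.2 D a b Yv Z]
          simp only [map_add, map_smul, LinearMap.add_apply, LinearMap.smul_apply]
        have h12 : (S (splits D) fun q => wmul (lprod p.1)
              (wmul (etaW (br Y₀ (p.2 ++ (a • Yv + b • Z) :: q.1))) (Psi L q.2)))
            = a • (S (splits D) fun q => wmul (lprod p.1)
                (wmul (etaW (br Y₀ (p.2 ++ Yv :: q.1))) (Psi L q.2)))
              + b • (S (splits D) fun q => wmul (lprod p.1)
                (wmul (etaW (br Y₀ (p.2 ++ Z :: q.1))) (Psi L q.2))) := by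
          refine S_comb _ _ _ _ a b fun q _ => ?_
          rw [hY₀ p.2 q.1 a b Yv Z]
          simp only [map_add, map_smul, LinearMap.add_apply, LinearMap.smul_apply]
        rw [h11, h12, smul_add, smul_add]
        abel
      have g2 : (S (splits D) fun p => S (splits p.2) fun q =>
            wmul (lprod (C ++ (a • Yv + b • Z) :: p.1)) (wmul (etaW (br Y₀ q.1)) (Psi L q.2)))
          = a • (S (splits D) fun p => S (splits p.2) fun q =>
              wmul (lprod (C ++ Yv :: p.1)) (wmul (etaW (br Y₀ q.1)) (Psi L q.2)))
            + b • (S (splits D) fun p => S (splits p.2) fun q =>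
              wmul (lprod (C ++ Z :: p.1)) (wmul (etaW (br Y₀ q.1)) (Psi L q.2))) := by
        refine S_comb _ _ _ _ a b fun p _ => ?_
        refine S_comb _ _ _ _ a b fun q _ => ?_
        rw [lprod_argLin C p.1 a b Yv Z]
        simp only [map_add, map_smul, LinearMap.add_apply, LinearMap.smul_apply]
      rw [g1, g2, smul_add, smul_add]
      abel

theorem brT_node' (x : X) (Ts : List (PTree X)) (A : List (PTree X →₀ k)) :
    brT (PTree.node x Ts) A = glin x (Psi (Ts.map eta1) A) := by
  rw [brT_node, Psi, List.length_map]
  exact (S_hom (glin x) _ _).symm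

theorem brT_argLin (T : PTree X) : ArgLin (brT (k := k) T) := by
  suffices h : ∀ (n : ℕ) (T : PTree X), sizeOf T ≤ n → ArgLin (brT (k := k) T) from
    h _ T le_rfl
  intro n
  induction n with
  | zero => intro T h; exact absurd (le_trans (sizeOf_pos T) h) (by omega)
  | succ n ih =>
      intro T h C D a b Y Z
      obtain ⟨x, Ts⟩ := T
      rw [brT_node', brT_node', brT_node']
      have hA : ArgLin (Psi (Ts.map (eta1 (k := k)))) := by
        refine Psi_argLin _ fun Y' hY' => ?_
        obtain ⟨T', hT', rfl⟩ := List.mem_map.1 hY'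
        intro C' D' a' b' Y'' Z''
        rw [br_eta1, br_eta1, br_eta1]
        exact ih T' (by have := sizeOf_mem_lt (x := x) hT'; omega) C' D' a' b' Y'' Z''
      rw [hA C D a b Y Z, map_add, map_smul, map_smul]

theorem br_argLin (v : PTree X →₀ k) : ArgLin (br v) := by
  intro C D a b Y Z
  rw [br_apply, br_apply, br_apply]
  have h1 : (v.sum fun T c => c • brT (k := k) T (C ++ (a • Y + b • Z) :: D))
      = v.sum fun T c => a • (c • brT T (C ++ Y :: D)) + b • (c • brT T (C ++ Z :: D)) :=
    Finsupp.sum_congr fun T _ => by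
      rw [brT_argLin T C D a b Y Z, smul_add, smul_comm (v T) a, smul_comm (v T) b]
  rw [h1, Finsupp.sum_add, ← Finsupp.smul_sum, ← Finsupp.smul_sum]

/-! ### Claim C : braces of grafted sums -/

theorem etaW_single (T : PTree X) (c : k) :
    etaW (Finsupp.single T c) = Finsupp.single [T] c := by
  rw [etaW, Finsupp.lmapDomain_apply, Finsupp.mapDomain_single]

noncomputable def PhiL (A : List (PTree X →₀ k)) :
    (List (PTree X) →₀ k) →ₗ[k] (List (PTree X) →₀ k) :=
  Finsupp.lsum k fun Us => LinearMap.toSpanSingleton k _ (Psi (Us.map eta1) A)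

theorem PhiL_single (A : List (PTree X →₀ k)) (Us : List (PTree X)) (c : k) :
    PhiL A (Finsupp.single Us c) = c • Psi (Us.map eta1) A := by
  rw [PhiL, Finsupp.lsum_single, LinearMap.toSpanSingleton_apply]

theorem single_eq_smul_eta1 (T : PTree X) (c : k) :
    Finsupp.single T c = c • eta1 T := by
  rw [eta1, Finsupp.smul_single', mul_one]

theorem ClaimC0 (x : X) (w : List (PTree X) →₀ k) (A : List (PTree X →₀ k)) :
    br (glin x w) A = glin x (PhiL A w) := by
  induction w using Finsupp.induction_linear with
  | zero => simp only [map_zero, br_zero_left]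
  | add w₁ w₂ ih₁ ih₂ => simp only [map_add, br_add_left, ih₁, ih₂]
  | single Us c =>
      rw [glin_single, PhiL_single, map_smul]
      rw [single_eq_smul_eta1, br_smul_left, br_eta1, brT_node']

theorem GEN (v : PTree X →₀ k) (w : List (PTree X) →₀ k) (A : List (PTree X →₀ k)) :
    PhiL A (wmul (etaW v) w) = S (splits A) fun p => S (splits p.2) fun q =>
      wmul (lprod p.1) (wmul (etaW (br v q.1)) (PhiL q.2 w)) := by
  induction v using Finsupp.induction_linear with
  | zero =>
      simp only [map_zero, LinearMap.zero_apply, br_zero_left, S_zero]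
  | add v₁ v₂ ih₁ ih₂ =>
      simp only [map_add, LinearMap.add_apply, br_add_left, ih₁, ih₂, S_add]
  | single T c =>
      induction w using Finsupp.induction_linear with
      | zero => simp only [map_zero, S_zero]
      | add w₁ w₂ ih₁ ih₂ => simp only [map_add, ih₁, ih₂, S_add]
      | single Us d =>
          rw [etaW_single, wmul_single_single]
          rw [show ([T] ++ Us : List (PTree X)) = T :: Us from rfl, PhiL_single]
          rw [show (T :: Us).map (eta1 (k := k)) = eta1 T :: Us.map eta1 from rfl, PsiREC]
          rw [S_smul]
          refine S_congr fun p _ => ?_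
          rw [S_smul]
          refine S_congr fun q _ => ?_
          rw [PhiL_single, single_eq_smul_eta1 T c, br_smul_left, br_eta1]
          simp only [map_smul, LinearMap.smul_apply, smul_smul]
          rw [mul_comm]

theorem ClaimC (L : List (PTree X →₀ k)) : ∀ A, PhiL A (lprod L) = Psi L A := by
  induction L with
  | nil =>
      intro A
      rw [lprod_nil, wone, PhiL_single, one_smul]
      rfl
  | cons v L ih =>
      intro A
      rw [lprod_cons, GEN, PsiREC]
      refine S_congr fun p _ => S_congr fun q _ => ?_
      rw [ih q.2]

/-! ### the splitting lemma for interleaves -/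

theorem SPLIT {M : Type*} [AddCommMonoid M] :
    ∀ (Ys : List (PTree X →₀ k)) (A : List (PTree X →₀ k))
      (F : List (PTree X →₀ k) → List (PTree X →₀ k) → M),
    S (cuts (2 * Ys.length + 1) A)
        (fun P => S (splits (interleave br Ys P)) fun bc => F bc.1 bc.2)
      = S (splits Ys) fun uw => S (splits A) fun ab =>
          S (cuts (2 * uw.1.length + 1) ab.1) fun P₁ =>
            S (cuts (2 * uw.2.length + 1) ab.2) fun P₂ =>
              F (interleave br uw.1 P₁) (interleave br uw.2 P₂) := by
  intro Ys
  induction Ys with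
  | nil =>
      intro A F
      rw [show 2 * ([] : List (PTree X →₀ k)).length + 1 = 1 by simp, S_cuts_one]
      have h0 : interleave br ([] : List (PTree X →₀ k)) [A] = A := by
        show [A].flatten = A
        simp
      rw [h0, splits_nil, S_singleton]
      refine S_congr fun ab _ => ?_
      show F ab.1 ab.2 = S (cuts 1 ab.1) fun P₁ => S (cuts 1 ab.2) fun P₂ =>
        F (interleave br [] P₁) (interleave br [] P₂)
      rw [S_cuts_one, S_cuts_one]
      have h1 : interleave br ([] : List (PTree X →₀ k)) [ab.1] = ab.1 := by
        show [ab.1].flatten = ab.1; simp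
      have h2 : interleave br ([] : List (PTree X →₀ k)) [ab.2] = ab.2 := by
        show [ab.2].flatten = ab.2; simp
      rw [h1, h2]
  | cons Y Ys ih =>
      intro A F
      have step1 : S (cuts (2 * (Y :: Ys).length + 1) A)
            (fun P => S (splits (interleave br (Y :: Ys) P)) fun bc => F bc.1 bc.2)
          = S (splits A) fun p => S (splits p.2) fun q =>
              S (cuts (2 * Ys.length + 1) q.2) fun Pr =>
                S (splits (p.1 ++ br Y q.1 :: interleave br Ys Pr)) fun bc => F bc.1 bc.2 := by
        rw [show 2 * (Y :: Ys).length + 1 = (2 * Ys.length + 1 + 1) + 1 by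
          simp [List.length_cons]; ring, S_cuts_succ]
        refine S_congr fun p _ => ?_
        rw [S_cuts_succ]
        rfl
      rw [step1]
      have step2 : ∀ p q : List (PTree X →₀ k) × List (PTree X →₀ k),
          (S (cuts (2 * Ys.length + 1) q.2) fun Pr =>
              S (splits (p.1 ++ br Y q.1 :: interleave br Ys Pr)) fun bc => F bc.1 bc.2)
            = (S (cuts (2 * Ys.length + 1) q.2) fun Pr => S (splits p.1) fun bc =>
                F bc.1 (bc.2 ++ br Y q.1 :: interleave br Ys Pr))
              + S (splits Ys) fun uw => S (splits q.2) fun ab =>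
                  S (cuts (2 * uw.1.length + 1) ab.1) fun P₁ =>
                    S (cuts (2 * uw.2.length + 1) ab.2) fun P₂ =>
                      F (p.1 ++ br Y q.1 :: interleave br uw.1 P₁) (interleave br uw.2 P₂) := by
        intro p q
        have hsp : ∀ Pr ∈ cuts (2 * Ys.length + 1) q.2,
            (S (splits (p.1 ++ br Y q.1 :: interleave br Ys Pr)) fun bc => F bc.1 bc.2)
              = (S (splits p.1) fun bc => F bc.1 (bc.2 ++ br Y q.1 :: interleave br Ys Pr))
                + S (splits (interleave br Ys Pr)) fun bc =>
                    F (p.1 ++ br Y q.1 :: bc.1) bc.2 := fun Pr _ =>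
          splits_append_cons p.1 (br Y q.1) (interleave br Ys Pr) F
        rw [S_congr hsp, S_add]
        congr 1
        exact ih q.2 fun u v => F (p.1 ++ br Y q.1 :: u) v
      rw [S_congr fun p (_ : p ∈ splits A) => S_congr fun q (_ : q ∈ splits p.2) => step2 p q]
      rw [S_congr fun p (_ : p ∈ splits A) => S_add (splits p.2) _ _, S_add]
      -- now LHS is E1 + E2; RHS is R0 + R1
      rw [S_splits_cons]
      congr 1
      -- E1 = R0
      · have sw : ∀ p : List (PTree X →₀ k) × List (PTree X →₀ k),
            (S (splits p.2) fun q => S (cuts (2 * Ys.length + 1) q.2) fun Pr =>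
                S (splits p.1) fun bc => F bc.1 (bc.2 ++ br Y q.1 :: interleave br Ys Pr))
              = S (splits p.1) fun bc => S (splits p.2) fun q =>
                  S (cuts (2 * Ys.length + 1) q.2) fun Pr =>
                    F bc.1 (bc.2 ++ br Y q.1 :: interleave br Ys Pr) := by
          intro p
          rw [S_congr fun q (_ : q ∈ splits p.2) =>
            S_comm (cuts (2 * Ys.length + 1) q.2) (splits p.1) _]
          exact S_comm (splits p.2) (splits p.1) _
        rw [S_congr fun p (_ : p ∈ splits A) => sw p]
        rw [← splits_assoc A fun u v w => S (splits w) fun q =>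
          S (cuts (2 * Ys.length + 1) q.2) fun Pr =>
            F u (v ++ br Y q.1 :: interleave br Ys Pr)]
        -- now shape: Σ_{p∈spA} Σ_{q∈sp p.2} Σ_{q'∈sp q.2} Σ_{Pr} F p.1 (q.1 ++ br Y q'.1 :: il Ys Pr)
        -- R0 : fun ab => cuts 1 ab.1 then cuts (2(m+1)+1) ab.2 unfolded
        refine S_congr fun ab _ => ?_
        show (S (splits ab.2) fun q => S (splits q.2) fun q' =>
            S (cuts (2 * Ys.length + 1) q'.2) fun Pr =>
              F ab.1 (q.1 ++ br Y q'.1 :: interleave br Ys Pr)) = _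
        rw [show 2 * (([], Y :: Ys) : List (PTree X →₀ k) × List (PTree X →₀ k)).1.length + 1
          = 1 by simp, S_cuts_one]
        rw [show 2 * (([], Y :: Ys) : List (PTree X →₀ k) × List (PTree X →₀ k)).2.length + 1
          = (2 * Ys.length + 1 + 1) + 1 by simp [List.length_cons]; ring]
        rw [S_cuts_succ]
        have hil : interleave br ([] : List (PTree X →₀ k)) [ab.1] = ab.1 := by
          show [ab.1].flatten = ab.1; simp
        refine S_congr fun p' _ => ?_
        rw [S_cuts_succ]
        refine S_congr fun q' _ => ?_
        refine S_congr fun Pr _ => ?_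
        show F ab.1 (p'.1 ++ br Y q'.1 :: interleave br Ys Pr)
            = F (interleave br [] [ab.1]) (interleave br (Y :: Ys) (p'.1 :: q'.1 :: Pr))
        rw [hil]
        rfl
      -- E2 = R1
      · have sw1 : ∀ p : List (PTree X →₀ k) × List (PTree X →₀ k),
            (S (splits p.2) fun q => S (splits Ys) fun uw => S (splits q.2) fun ab =>
                S (cuts (2 * uw.1.length + 1) ab.1) fun P₁ =>
                  S (cuts (2 * uw.2.length + 1) ab.2) fun P₂ =>
                    F (p.1 ++ br Y q.1 :: interleave br uw.1 P₁) (interleave br uw.2 P₂))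
              = S (splits Ys) fun uw => S (splits p.2) fun q => S (splits q.2) fun ab =>
                  S (cuts (2 * uw.1.length + 1) ab.1) fun P₁ =>
                    S (cuts (2 * uw.2.length + 1) ab.2) fun P₂ =>
                      F (p.1 ++ br Y q.1 :: interleave br uw.1 P₁) (interleave br uw.2 P₂) :=
          fun p => S_comm (splits p.2) (splits Ys) _
        rw [S_congr fun p (_ : p ∈ splits A) => sw1 p]
        rw [S_comm (splits A) (splits Ys) _]
        refine S_congr fun uw _ => ?_
        -- fixed uw : 4-way reassociation
        rw [splits_assoc4 A fun u v w₃ w₄ =>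
          S (cuts (2 * uw.1.length + 1) w₃) fun P₁ =>
            S (cuts (2 * uw.2.length + 1) w₄) fun P₂ =>
              F (u ++ br Y v :: interleave br uw.1 P₁) (interleave br uw.2 P₂)]
        -- match against R1 unfolded
        refine S_congr fun ab _ => ?_
        show _ = S (cuts (2 * ((Y :: uw.1, uw.2) :
            List (PTree X →₀ k) × List (PTree X →₀ k)).1.length + 1) ab.1) fun P₁ =>
          S (cuts (2 * uw.2.length + 1) ab.2) fun P₂ =>
            F (interleave br (Y :: uw.1) P₁) (interleave br uw.2 P₂)
        rw [show 2 * ((Y :: uw.1, uw.2) :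
            List (PTree X →₀ k) × List (PTree X →₀ k)).1.length + 1
          = (2 * uw.1.length + 1 + 1) + 1 by simp [List.length_cons]; ring]
        rw [S_cuts_succ]
        refine S_congr fun p' _ => ?_
        rw [S_cuts_succ]
        rfl

theorem S_wmul_pull2 {α β : Type*} (c d : List (PTree X) →₀ k) (l : List α)
    (m : α → List β) (f : α → β → (List (PTree X) →₀ k)) :
    S l (fun x => S (m x) fun y => wmul c (wmul d (f x y)))
      = wmul c (wmul d (S l fun x => S (m x) (f x))) := by
  have h1 : ∀ x ∈ l, (S (m x) fun y => wmul c (wmul d (f x y)))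
      = wmul c (wmul d (S (m x) (f x))) := by
    intro x _
    rw [S_wmul_left, S_wmul_left]
  rw [S_congr h1, S_wmul_left, S_wmul_left]

/-! ### the main composition identity -/

theorem MAIN : ∀ (Ts : List (PTree X)),
    (∀ T ∈ Ts, ∀ Ys A : List (PTree X →₀ k), br (brT T Ys) A
      = S (cuts (2 * Ys.length + 1) A) fun P => brT T (interleave br Ys P)) →
    ∀ Ys A : List (PTree X →₀ k),
    S (cuts (2 * Ts.length + 1) Ys) (fun Q => Psi (interleave br (Ts.map eta1) Q) A)
      = S (cuts (2 * Ys.length + 1) A) fun P =>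
          S (cuts (2 * Ts.length + 1) (interleave br Ys P)) fun Q' =>
            lprod (interleave br (Ts.map eta1) Q') := by
  intro Ts
  induction Ts with
  | nil =>
      intro _ Ys A
      rw [show 2 * ([] : List (PTree X)).length + 1 = 1 by simp, S_cuts_one]
      have h0 : ∀ B : List (PTree X →₀ k),
          interleave br (([] : List (PTree X)).map eta1) [B] = B := by
        intro B; show [B].flatten = B; simp
      rw [h0 Ys, Psi]
      refine S_congr fun P _ => ?_
      rw [S_cuts_one, h0 (interleave br Ys P)]
  | cons T Ts ih =>
      intro hID Ys A
      have hT := hID T (by simp)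
      have ihTs := ih fun T' hT' => hID T' (by simp [hT'])
      have lenL : 2 * ((T :: Ts).length) + 1 = (2 * Ts.length + 1 + 1) + 1 := by
        simp [List.length_cons]; ring
      -- Step A : unfold the two extra cuts on the left
      have stepA : S (cuts (2 * (T :: Ts).length + 1) Ys)
            (fun Q => Psi (interleave br ((T :: Ts).map eta1) Q) A)
          = S (splits Ys) fun p => S (splits p.2) fun q =>
              S (cuts (2 * Ts.length + 1) q.2) fun Qr =>
                Psi (p.1 ++ brT T q.1 :: interleave br (Ts.map eta1) Qr) A := by
        rw [lenL, S_cuts_succ]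
        refine S_congr fun p _ => ?_
        rw [S_cuts_succ]
        refine S_congr fun q _ => ?_
        refine S_congr fun Qr _ => ?_
        show Psi (p.1 ++ br (eta1 T) q.1 :: interleave br (Ts.map eta1) Qr) A = _
        rw [br_eta1]
      rw [stepA]
      -- Step B : expand each Psi and use the brace identity for T and the induction
      -- hypothesis for Ts
      have stepB : ∀ p q : List (PTree X →₀ k) × List (PTree X →₀ k),
          (S (cuts (2 * Ts.length + 1) q.2) fun Qr =>
            Psi (p.1 ++ brT T q.1 :: interleave br (Ts.map eta1) Qr) A)
          = S (splits A) fun ab => S (splits ab.2) fun p' => S (splits p'.2) fun q' =>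
              S (cuts (2 * q.1.length + 1) q'.1) fun R =>
                S (cuts (2 * q.2.length + 1) q'.2) fun P₃ =>
                  wmul (Psip p.1 ab.1) (wmul (lprod p'.1)
                    (wmul (etaW (brT T (interleave br q.1 R)))
                      (S (cuts (2 * Ts.length + 1) (interleave br q.2 P₃)) fun Q'r =>
                        lprod (interleave br (Ts.map eta1) Q'r)))) := by
        intro p q
        have h1 : ∀ Qr ∈ cuts (2 * Ts.length + 1) q.2,
            Psi (p.1 ++ brT T q.1 :: interleave br (Ts.map eta1) Qr) A
            = S (splits A) fun ab => S (splits ab.2) fun p' => S (splits p'.2) fun q' =>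
                S (cuts (2 * q.1.length + 1) q'.1) fun R =>
                  wmul (Psip p.1 ab.1) (wmul (lprod p'.1)
                    (wmul (etaW (brT T (interleave br q.1 R)))
                      (Psi (interleave br (Ts.map eta1) Qr) q'.2))) := by
          intro Qr _
          rw [PsiAPP]
          refine S_congr fun ab _ => ?_
          rw [PsiREC, ← S_wmul_left]
          refine S_congr fun p' _ => ?_
          rw [← S_wmul_left]
          refine S_congr fun q' _ => ?_
          rw [hT q.1 q'.1, S_hom etaW, ← S_wmul_right, ← S_wmul_left, ← S_wmul_left]
        rw [S_congr h1]
        rw [S_comm (cuts (2 * Ts.length + 1) q.2) (splits A) _]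
        refine S_congr fun ab _ => ?_
        rw [S_comm (cuts (2 * Ts.length + 1) q.2) (splits ab.2) _]
        refine S_congr fun p' _ => ?_
        rw [S_comm (cuts (2 * Ts.length + 1) q.2) (splits p'.2) _]
        refine S_congr fun q' _ => ?_
        rw [S_comm (cuts (2 * Ts.length + 1) q.2) (cuts (2 * q.1.length + 1) q'.1) _]
        refine S_congr fun R _ => ?_
        rw [S_wmul_left, S_wmul_left, S_wmul_left, ihTs q.2 q'.2]
        rw [← S_wmul_left, ← S_wmul_left, ← S_wmul_left]
      rw [S_congr fun p (_ : p ∈ splits Ys) => S_congr fun q (_ : q ∈ splits p.2) => stepB p q]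
      -- Now work on the right-hand side
      have stepA' : (S (cuts (2 * Ys.length + 1) A) fun P =>
            S (cuts (2 * (T :: Ts).length + 1) (interleave br Ys P)) fun Q' =>
              lprod (interleave br ((T :: Ts).map eta1) Q'))
          = S (cuts (2 * Ys.length + 1) A) fun P =>
              S (splits (interleave br Ys P)) fun b₁ => S (splits b₁.2) fun b₂ =>
                S (cuts (2 * Ts.length + 1) b₂.2) fun Q'r =>
                  wmul (lprod b₁.1) (wmul (etaW (brT T b₂.1))
                    (lprod (interleave br (Ts.map eta1) Q'r))) := by
        refine S_congr fun P _ => ?_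
        rw [lenL, S_cuts_succ]
        refine S_congr fun b₁ _ => ?_
        rw [S_cuts_succ]
        refine S_congr fun b₂ _ => ?_
        refine S_congr fun Q'r _ => ?_
        show lprod (b₁.1 ++ br (eta1 T) b₂.1 :: interleave br (Ts.map eta1) Q'r) = _
        rw [br_eta1, lprod_middle]
      rw [stepA']
      rw [SPLIT Ys A fun B C => S (splits C) fun b₂ =>
        S (cuts (2 * Ts.length + 1) b₂.2) fun Q'r =>
          wmul (lprod B) (wmul (etaW (brT T b₂.1))
            (lprod (interleave br (Ts.map eta1) Q'r)))]
      refine S_congr fun p _ => ?_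
      -- second SPLIT, inside the P₁-sum
      have step2 : ∀ ab : List (PTree X →₀ k) × List (PTree X →₀ k),
          ∀ P₁ ∈ cuts (2 * p.1.length + 1) ab.1,
          (S (cuts (2 * p.2.length + 1) ab.2) fun P₂ =>
            S (splits (interleave br p.2 P₂)) fun b₂ =>
              S (cuts (2 * Ts.length + 1) b₂.2) fun Q'r =>
                wmul (lprod (interleave br p.1 P₁)) (wmul (etaW (brT T b₂.1))
                  (lprod (interleave br (Ts.map eta1) Q'r))))
          = S (splits p.2) fun vw => S (splits ab.2) fun cd =>
              S (cuts (2 * vw.1.length + 1) cd.1) fun P₂' =>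
                S (cuts (2 * vw.2.length + 1) cd.2) fun P₃ =>
                  S (cuts (2 * Ts.length + 1) (interleave br vw.2 P₃)) fun Q'r =>
                    wmul (lprod (interleave br p.1 P₁)) (wmul (etaW (brT T
                      (interleave br vw.1 P₂')))
                      (lprod (interleave br (Ts.map eta1) Q'r))) := by
        intro ab P₁ _
        exact SPLIT p.2 ab.2 fun B' C' =>
          S (cuts (2 * Ts.length + 1) C') fun Q'r =>
            wmul (lprod (interleave br p.1 P₁)) (wmul (etaW (brT T B'))
              (lprod (interleave br (Ts.map eta1) Q'r)))
      rw [S_congr fun ab (_ : ab ∈ splits A) => S_congr fun P₁ hP₁ => step2 ab P₁ hP₁]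
      -- reorganize the right-hand side
      have step3 : ∀ ab : List (PTree X →₀ k) × List (PTree X →₀ k),
          (S (cuts (2 * p.1.length + 1) ab.1) fun P₁ =>
            S (splits p.2) fun vw => S (splits ab.2) fun cd =>
              S (cuts (2 * vw.1.length + 1) cd.1) fun P₂' =>
                S (cuts (2 * vw.2.length + 1) cd.2) fun P₃ =>
                  S (cuts (2 * Ts.length + 1) (interleave br vw.2 P₃)) fun Q'r =>
                    wmul (lprod (interleave br p.1 P₁)) (wmul (etaW (brT T
                      (interleave br vw.1 P₂')))
                      (lprod (interleave br (Ts.map eta1) Q'r))))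
          = S (splits p.2) fun vw => S (splits ab.2) fun cd =>
              S (splits ab.1) fun ef =>
                S (cuts (2 * vw.1.length + 1) cd.1) fun P₂' =>
                  S (cuts (2 * vw.2.length + 1) cd.2) fun P₃ =>
                    wmul (Psip p.1 ef.1) (wmul (lprod ef.2)
                      (wmul (etaW (brT T (interleave br vw.1 P₂')))
                        (S (cuts (2 * Ts.length + 1) (interleave br vw.2 P₃)) fun Q'r =>
                          lprod (interleave br (Ts.map eta1) Q'r)))) := by
        intro ab
        rw [S_comm (cuts (2 * p.1.length + 1) ab.1) (splits p.2) _]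
        refine S_congr fun vw _ => ?_
        rw [S_comm (cuts (2 * p.1.length + 1) ab.1) (splits ab.2) _]
        refine S_congr fun cd _ => ?_
        -- pull everything through the P₁ sum
        have inner1 : ∀ P₁ ∈ cuts (2 * p.1.length + 1) ab.1,
            (S (cuts (2 * vw.1.length + 1) cd.1) fun P₂' =>
              S (cuts (2 * vw.2.length + 1) cd.2) fun P₃ =>
                S (cuts (2 * Ts.length + 1) (interleave br vw.2 P₃)) fun Q'r =>
                  wmul (lprod (interleave br p.1 P₁)) (wmul (etaW (brT T
                    (interleave br vw.1 P₂')))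
                    (lprod (interleave br (Ts.map eta1) Q'r))))
            = wmul (lprod (interleave br p.1 P₁))
                (S (cuts (2 * vw.1.length + 1) cd.1) fun P₂' =>
                  S (cuts (2 * vw.2.length + 1) cd.2) fun P₃ =>
                    wmul (etaW (brT T (interleave br vw.1 P₂')))
                      (S (cuts (2 * Ts.length + 1) (interleave br vw.2 P₃)) fun Q'r =>
                        lprod (interleave br (Ts.map eta1) Q'r))) := by
          intro P₁ _
          rw [← S_wmul_left]
          refine S_congr fun P₂' _ => ?_
          rw [← S_wmul_left]
          refine S_congr fun P₃ _ => ?_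
          rw [← S_wmul_left, ← S_wmul_left]
        rw [S_congr inner1, S_wmul_right]
        have : (S (cuts (2 * p.1.length + 1) ab.1) fun P₁ =>
            lprod (interleave br p.1 P₁)) = Psi p.1 ab.1 := rfl
        rw [this, PsiPsip, ← S_wmul_right]
        refine S_congr fun ef _ => ?_
        rw [wmul_assoc]
        exact (S_wmul_pull2 (Psip p.1 ef.1) (lprod ef.2) _ _ _).symm
      rw [S_congr fun ab (_ : ab ∈ splits A) => step3 ab]
      -- final reassociation
      rw [S_comm (splits A) (splits p.2) _]
      refine S_congr fun q _ => ?_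
      have final : (S (splits A) fun ab => S (splits ab.2) fun cd => S (splits ab.1) fun ef =>
            S (cuts (2 * q.1.length + 1) cd.1) fun P₂' =>
              S (cuts (2 * q.2.length + 1) cd.2) fun P₃ =>
                wmul (Psip p.1 ef.1) (wmul (lprod ef.2)
                  (wmul (etaW (brT T (interleave br q.1 P₂')))
                    (S (cuts (2 * Ts.length + 1) (interleave br q.2 P₃)) fun Q'r =>
                      lprod (interleave br (Ts.map eta1) Q'r)))))
          = S (splits A) fun ab => S (splits ab.1) fun ef => S (splits ab.2) fun cd =>
              S (cuts (2 * q.1.length + 1) cd.1) fun P₂' =>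
                S (cuts (2 * q.2.length + 1) cd.2) fun P₃ =>
                  wmul (Psip p.1 ef.1) (wmul (lprod ef.2)
                    (wmul (etaW (brT T (interleave br q.1 P₂')))
                      (S (cuts (2 * Ts.length + 1) (interleave br q.2 P₃)) fun Q'r =>
                        lprod (interleave br (Ts.map eta1) Q'r)))) := by
        refine S_congr fun ab _ => ?_
        exact S_comm (splits ab.2) (splits ab.1) _
      rw [final]
      rw [← splits_assoc4b A fun w₁ w₂ w₃ w₄ =>
        S (cuts (2 * q.1.length + 1) w₃) fun P₂' =>
          S (cuts (2 * q.2.length + 1) w₄) fun P₃ =>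
            wmul (Psip p.1 w₁) (wmul (lprod w₂)
              (wmul (etaW (brT T (interleave br q.1 P₂')))
                (S (cuts (2 * Ts.length + 1) (interleave br q.2 P₃)) fun Q'r =>
                  lprod (interleave br (Ts.map eta1) Q'r))))]

/-! ### the brace identity -/

theorem Psi_def (L A : List (PTree X →₀ k)) :
    Psi L A = S (cuts (2 * L.length + 1) A) fun P => lprod (interleave br L P) := rfl

theorem brT_identity : ∀ (T : PTree X) (Ys A : List (PTree X →₀ k)),
    br (brT T Ys) A = S (cuts (2 * Ys.length + 1) A) fun P => brT T (interleave br Ys P) := by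
  suffices h : ∀ (n : ℕ) (T : PTree X), sizeOf T ≤ n → ∀ Ys A : List (PTree X →₀ k),
      br (brT T Ys) A = S (cuts (2 * Ys.length + 1) A) fun P =>
        brT T (interleave br Ys P) from fun T => h _ T le_rfl
  intro n
  induction n with
  | zero => intro T h; exact absurd (le_trans (sizeOf_pos T) h) (by omega)
  | succ n ih =>
      intro T h Ys A
      obtain ⟨x, Ts⟩ := T
      have hID : ∀ T' ∈ Ts, ∀ Ys A : List (PTree X →₀ k),
          br (brT T' Ys) A = S (cuts (2 * Ys.length + 1) A) fun P =>
            brT T' (interleave br Ys P) :=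
        fun T' hT' => ih T' (by have := sizeOf_mem_lt (x := x) hT'; omega)
      rw [brT_node' x Ts Ys, ClaimC0]
      have h1 : PhiL A (Psi (Ts.map eta1) Ys)
          = S (cuts (2 * Ys.length + 1) A) fun P =>
              Psi (Ts.map eta1) (interleave br Ys P) := by
        rw [Psi_def, List.length_map, S_hom (PhiL A)]
        rw [S_congr fun Q (_ : Q ∈ cuts (2 * Ts.length + 1) Ys) =>
          ClaimC (interleave br (Ts.map eta1) Q) A]
        rw [MAIN Ts hID Ys A]
        refine S_congr fun P _ => ?_
        rw [Psi_def, List.length_map]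
      rw [h1, S_hom (glin x)]
      refine S_congr fun P _ => ?_
      rw [brT_node']

theorem br_identity (Xv : PTree X →₀ k) (Ys A : List (PTree X →₀ k)) :
    br (br Xv Ys) A = S (cuts (2 * Ys.length + 1) A) fun P => br Xv (interleave br Ys P) := by
  induction Xv using Finsupp.induction_linear with
  | zero =>
      rw [br_zero_left, br_zero_left]
      rw [S_congr fun P (_ : P ∈ cuts (2 * Ys.length + 1) A) =>
        br_zero_left (interleave br Ys P), S_zero]
  | add v w ihv ihw => simp only [br_add_left, ihv, ihw, S_add]
  | single T c =>
      rw [single_eq_smul_eta1, br_smul_left, br_smul_left, br_eta1, brT_identity, S_smul]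
      refine S_congr fun P _ => ?_
      rw [br_smul_left, br_eta1]

/-! ### the brace algebra structure -/

noncomputable def theB : BraceAlg k (PTree X →₀ k) where
  br := br
  br_nil := br_nil
  br_linear_left := fun A => ⟨fun v w => br_add_left v w A, fun c v => br_smul_left c v A⟩
  br_linear_arg := fun Xv A B a b Y Z => br_argLin Xv A B a b Y Z
  br_identity := fun Xv Ys A => br_identity Xv Ys A

theorem theB_graft (x : X) (Ts : List (PTree X)) :
    br (Finsupp.single (PTree.node x []) 1)
        (Ts.map fun T => Finsupp.single T (1 : k))
      = Finsupp.single (PTree.node x Ts) 1 := by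
  show br (eta1 (PTree.node x [])) (Ts.map eta1) = _
  rw [br_eta1, brT_node']
  rw [show ([] : List (PTree X)).map (eta1 (k := k)) = [] from rfl, Psi_nil, lprod_eta1,
    glin_single]

/-! ### uniqueness -/

theorem splits_map {α β : Type*} (g : α → β) (L : List α) :
    splits (L.map g) = (splits L).map fun p => (p.1.map g, p.2.map g) := by
  induction L with
  | nil => rfl
  | cons a L ih =>
      rw [List.map_cons, splits_cons, splits_cons, ih]
      simp [List.map_map, Function.comp]

theorem cuts_map {α β : Type*} (g : α → β) :
    ∀ (j : ℕ) (L : List α), cuts j (L.map g) = (cuts j L).map fun P => P.map (List.map g) := by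
  intro j
  induction j with
  | zero =>
      intro L
      rcases L with _ | ⟨a, L⟩
      · rfl
      · rw [cuts_zero_ne (by simp), cuts_zero_ne (by simp)]
        rfl
  | succ j ih =>
      intro L
      rw [cuts_succ_eq, cuts_succ_eq, splits_map]
      rw [List.flatMap_map, List.map_flatMap]
      refine congrArg (fun f => List.flatMap f (splits L)) (funext fun p => ?_)
      rw [ih p.2, List.map_map, List.map_map]
      rfl

theorem il_congr_on {f g : (PTree X →₀ k) → List (PTree X →₀ k) → (PTree X →₀ k)} :
    ∀ (Ts' : List (PTree X)) (P₀ : List (List (PTree X))),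
      (∀ T' ∈ Ts', ∀ B : List (PTree X), f (eta1 T') (B.map eta1) = g (eta1 T') (B.map eta1)) →
      interleave f (Ts'.map eta1) (P₀.map (List.map eta1))
        = interleave g (Ts'.map eta1) (P₀.map (List.map eta1)) := by
  intro Ts'
  induction Ts' with
  | nil => intro P₀ _; rfl
  | cons T' Ts' ih =>
      intro P₀ h
      match P₀ with
      | [] => rfl
      | [B] => rfl
      | B1 :: B2 :: P₀ =>
          show B1.map eta1 ++ f (eta1 T') (B2.map eta1) :: interleave f (Ts'.map eta1)
              (P₀.map (List.map eta1)) = B1.map eta1 ++ g (eta1 T') (B2.map eta1) ::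
              interleave g (Ts'.map eta1) (P₀.map (List.map eta1))
          rw [h T' (by simp) B2, ih P₀ fun T'' hT'' B => h T'' (by simp [hT'']) B]

theorem bexpand (b : BraceAlg k (PTree X →₀ k)) (Xv : PTree X →₀ k)
    (C D : List (PTree X →₀ k)) (v : PTree X →₀ k) :
    b.br Xv (C ++ v :: D) = v.sum fun T c => c • b.br Xv (C ++ eta1 T :: D) := by
  induction v using Finsupp.induction with
  | zero =>
      have h := b.br_linear_arg Xv C D 1 1 0 0
      simp only [smul_zero, add_zero, one_smul] at h
      rw [Finsupp.sum_zero_index]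
      exact right_eq_add.mp h
  | single_add a r f ha hr ih =>
      have hrw : Finsupp.single a r + f = r • eta1 a + (1 : k) • f := by
        rw [one_smul, single_eq_smul_eta1]
      rw [hrw, b.br_linear_arg, ← hrw, one_smul, ih]
      rw [Finsupp.sum_add_index' (fun T => by rw [zero_smul])
        (fun T c₁ c₂ => by rw [add_smul])]
      rw [Finsupp.sum_single_index (by rw [zero_smul])]

theorem agree (b d : BraceAlg k (PTree X →₀ k)) (Xv : PTree X →₀ k)
    (hX : ∀ L : List (PTree X), b.br Xv (L.map eta1) = d.br Xv (L.map eta1)) :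
    ∀ A : List (PTree X →₀ k), b.br Xv A = d.br Xv A := by
  suffices h : ∀ (A₂ : List (PTree X →₀ k)) (A₁ : List (PTree X)),
      b.br Xv (A₁.map eta1 ++ A₂) = d.br Xv (A₁.map eta1 ++ A₂) by
    intro A
    simpa using h A []
  intro A₂
  induction A₂ with
  | nil =>
      intro A₁
      simpa using hX A₁
  | cons v A₂ ih =>
      intro A₁
      rw [bexpand b, bexpand d]
      refine Finsupp.sum_congr fun T _ => ?_
      have hre : A₁.map (eta1 (k := k)) ++ eta1 T :: A₂ = (A₁ ++ [T]).map eta1 ++ A₂ := by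
        simp
      rw [hre, ih (A₁ ++ [T])]

theorem treeAgree (b : BraceAlg k (PTree X →₀ k))
    (hb : ∀ (x : X) (Ts : List (PTree X)),
      b.br (Finsupp.single (PTree.node x []) 1) (Ts.map fun T => Finsupp.single T 1)
        = Finsupp.single (PTree.node x Ts) 1) :
    ∀ (T : PTree X) (L : List (PTree X)),
      b.br (eta1 T) (L.map eta1) = br (eta1 T) (L.map eta1) := by
  suffices h : ∀ (n : ℕ) (T : PTree X), sizeOf T ≤ n → ∀ L : List (PTree X),
      b.br (eta1 T) (L.map eta1) = br (eta1 T) (L.map eta1) from fun T => h _ T le_rfl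
  intro n
  induction n with
  | zero => intro T h; exact absurd (le_trans (sizeOf_pos T) h) (by omega)
  | succ n ih =>
      intro T hT L
      obtain ⟨x, Ts⟩ := T
      have ihsub : ∀ T' ∈ Ts, ∀ B : List (PTree X),
          b.br (eta1 T') (B.map eta1) = br (eta1 T') (B.map eta1) :=
        fun T' hT' => ih T' (by have := sizeOf_mem_lt (x := x) hT'; omega)
      have hbT : b.br (eta1 (PTree.node x [])) (Ts.map eta1) = eta1 (PTree.node x Ts) :=
        hb x Ts
      have hgT : br (eta1 (PTree.node x [])) (Ts.map eta1) = eta1 (PTree.node x Ts) :=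
        theB_graft (k := k) (X := X) x Ts
      -- expand both sides with the respective brace identities
      have hcor : ∀ L' : List (PTree X),
          b.br (eta1 (PTree.node x [])) (L'.map eta1)
            = br (eta1 (PTree.node x [])) (L'.map eta1) := by
        intro L'
        show b.br (Finsupp.single (PTree.node x []) 1) (L'.map fun T => Finsupp.single T 1)
            = br (Finsupp.single (PTree.node x []) 1) (L'.map fun T => Finsupp.single T 1)
        rw [hb x L']
        exact (theB_graft (k := k) (X := X) x L').symm
      have hagree : ∀ A : List (PTree X →₀ k),
          b.br (eta1 (PTree.node x [])) A = br (eta1 (PTree.node x [])) A :=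
        agree b (theB (k := k) (X := X)) (eta1 (PTree.node x [])) hcor
      calc b.br (eta1 (PTree.node x Ts)) (L.map eta1)
          = b.br (b.br (eta1 (PTree.node x [])) (Ts.map eta1)) (L.map eta1) := by rw [hbT]
        _ = S (cuts (2 * (Ts.map (eta1 (k := k))).length + 1) (L.map eta1)) fun P =>
              b.br (eta1 (PTree.node x [])) (interleave b.br (Ts.map eta1) P) :=
            b.br_identity _ _ _
        _ = S (cuts (2 * (Ts.map (eta1 (k := k))).length + 1) (L.map eta1)) fun P =>
              br (eta1 (PTree.node x [])) (interleave br (Ts.map eta1) P) := by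
            refine S_congr fun P hP => ?_
            rw [List.length_map, cuts_map] at hP
            obtain ⟨P₀, _, rfl⟩ := List.mem_map.1 hP
            rw [il_congr_on Ts P₀ ihsub, hagree]
        _ = br (br (eta1 (PTree.node x [])) (Ts.map eta1)) (L.map eta1) :=
            (br_identity _ _ _).symm
        _ = br (eta1 (PTree.node x Ts)) (L.map eta1) := by rw [hgT]

theorem braceAlg_ext {b d : BraceAlg k (PTree X →₀ k)} (h : b.br = d.br) : b = d := by
  obtain ⟨b1, b2, b3, b4, b5⟩ := b
  obtain ⟨d1, d2, d3, d4, d5⟩ := d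
  dsimp at h
  subst h
  rfl

theorem linExpand (b : BraceAlg k (PTree X →₀ k)) (A : List (PTree X →₀ k))
    (v : PTree X →₀ k) :
    b.br v A = v.sum fun T c => c • b.br (eta1 T) A := by
  induction v using Finsupp.induction with
  | zero =>
      rw [Finsupp.sum_zero_index, (b.br_linear_left A).map_zero]
  | single_add a r f ha hr ih =>
      have h1 : b.br (Finsupp.single a r + f) A = b.br (Finsupp.single a r) A + b.br f A :=
        (b.br_linear_left A).map_add _ _
      have h2 : b.br (Finsupp.single a r) A = r • b.br (eta1 a) A := by
        rw [single_eq_smul_eta1, (b.br_linear_left A).map_smul]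
      rw [h1, h2, ih]
      rw [Finsupp.sum_add_index' (fun T => by rw [zero_smul])
        (fun T c₁ c₂ => by rw [add_smul])]
      rw [Finsupp.sum_single_index (by rw [zero_smul])]

theorem uniqueness (b : BraceAlg k (PTree X →₀ k))
    (hb : ∀ (x : X) (Ts : List (PTree X)),
      b.br (Finsupp.single (PTree.node x []) 1) (Ts.map fun T => Finsupp.single T 1)
        = Finsupp.single (PTree.node x Ts) 1) :
    b = theB := by
  refine braceAlg_ext (funext fun v => funext fun A => ?_)
  rw [linExpand b A v, linExpand (theB (k := k) (X := X)) A v]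
  refine Finsupp.sum_congr fun T _ => ?_
  congr 1
  exact agree b (theB (k := k) (X := X)) (eta1 T) (treeAgree b hb T) A

end PB

/-- Let `k` be a commutative ring and `X` a type.  There is a unique brace
algebra structure on `BR(X)`, the free `k`-module on the set of `X`-colored planar rooted
trees, such that for every `x ∈ X` and all trees `T_1, …, T_n`:
`•_x{T_1, …, T_n} = node x [T_1, …, T_n]` (grafting `T_1, …, T_n`, in this order, on a new
root colored `x`). -/
theorem planar_trees_free_brace
    (k X : Type*) [CommRing k] :
    ∃! b : BraceAlg k (PTree X →₀ k),
      ∀ (x : X) (Ts : List (PTree X)),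
        b.br (Finsupp.single (PTree.node x []) 1)
            (Ts.map fun T => Finsupp.single T (1 : k)) =
          Finsupp.single (PTree.node x Ts) 1 := by
  exact ⟨PB.theB, fun x Ts => PB.theB_graft x Ts, fun b hb => PB.uniqueness b hb⟩
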